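/- Let f : R^N → R be twice continuously differentiable with bounded second derivatives on a ball around x, let ω_n = (2π/T)κ_n with distinct positive integers κ_n, and sin(ωt) := (sin(ω_n t))_{n=1}^N. Then for each n, (1/T)∫₀ᵀ (2/a) f(x + a sin(ωt)) sin(ω_n t) dt = ∂f/∂x_n(x) + O(a) as a → 0⁺, where the O(a) constant depends only on the bound on the second derivatives of f. -/

import Mathlib

open intervalIntegral Real

lemma aux_cos (T : ℝ) (hT : 0 < T) (m : ℤ) :
    ∫ t in (0:ℝ)..T, Real.cos (2 * Real.pi / T * m * t) = if m = 0 then T else 0 := by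
  rcases eq_or_ne m 0 with h | h
  · simp [h]
  · have hπ := Real.pi_pos
    have hc : (2 * Real.pi / T * m) ≠ 0 :=
      mul_ne_zero (by positivity) (Int.cast_ne_zero.mpr h)
    rw [if_neg h, intervalIntegral.integral_comp_mul_left Real.cos hc, mul_zero, integral_cos]
    have h1 : Real.sin (2 * Real.pi / T * m * T) = 0 := by
      have h2 : 2 * Real.pi / T * m * T = (2 * m : ℤ) * Real.pi := by
        push_cast
        field_simp
      rw [h2, Real.sin_int_mul_pi]
    simp [h1]

lemma aux_sin (T : ℝ) (hT : 0 < T) (m : ℕ) :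
    ∫ t in (0:ℝ)..T, Real.sin (2 * Real.pi / T * m * t) = 0 := by
  rcases Nat.eq_zero_or_pos m with h | h
  · simp [h]
  · have hπ := Real.pi_pos
    have hc : (2 * Real.pi / T * m) ≠ 0 := by
      apply mul_ne_zero (by positivity)
      exact_mod_cast h.ne'
    rw [intervalIntegral.integral_comp_mul_left Real.sin hc, mul_zero, integral_sin]
    have h1 : Real.cos (2 * Real.pi / T * m * T) = 1 := by
      have h2 : 2 * Real.pi / T * m * T = (m : ℝ) * (2 * Real.pi) := by
        field_simp
      rw [h2, Real.cos_nat_mul_two_pi]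
    simp [h1]

lemma aux_orth (T : ℝ) (hT : 0 < T) (k l : ℕ) (hk : 0 < k) (hl : 0 < l) :
    ∫ t in (0:ℝ)..T, Real.sin (2 * Real.pi / T * k * t) * Real.sin (2 * Real.pi / T * l * t)
      = if k = l then T / 2 else 0 := by
  have key : ∀ t : ℝ, Real.sin (2 * Real.pi / T * k * t) * Real.sin (2 * Real.pi / T * l * t)
      = (Real.cos (2 * Real.pi / T * (((k : ℤ) - (l : ℤ) : ℤ) : ℝ) * t)
          - Real.cos (2 * Real.pi / T * (((k : ℤ) + (l : ℤ) : ℤ) : ℝ) * t)) / 2 := by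
    intro t
    have h := Real.two_mul_sin_mul_sin (2 * Real.pi / T * k * t) (2 * Real.pi / T * l * t)
    have h1 : 2 * Real.pi / T * k * t - 2 * Real.pi / T * l * t
        = 2 * Real.pi / T * (((k : ℤ) - (l : ℤ) : ℤ) : ℝ) * t := by push_cast; ring
    have h2 : 2 * Real.pi / T * k * t + 2 * Real.pi / T * l * t
        = 2 * Real.pi / T * (((k : ℤ) + (l : ℤ) : ℤ) : ℝ) * t := by push_cast; ring
    rw [h1, h2] at h
    linarith
  rw [intervalIntegral.integral_congr (fun t _ => key t)]
  have c1 : Continuous fun t : ℝ => Real.cos (2 * Real.pi / T * (((k : ℤ) - (l : ℤ) : ℤ) : ℝ) * t) := by fun_prop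
  have c2 : Continuous fun t : ℝ => Real.cos (2 * Real.pi / T * (((k : ℤ) + (l : ℤ) : ℤ) : ℝ) * t) := by fun_prop
  rw [intervalIntegral.integral_div, intervalIntegral.integral_sub
    (c1.intervalIntegrable 0 T) (c2.intervalIntegrable 0 T), aux_cos T hT, aux_cos T hT]
  have hkl : ((k : ℤ) + l) ≠ 0 := by positivity
  rw [if_neg hkl]
  by_cases h : k = l
  · rw [if_pos (by omega : (k : ℤ) - (l : ℤ) = 0), if_pos h]; ring
  · rw [if_neg (by omega : ¬ ((k : ℤ) - (l : ℤ) = 0)), if_neg h]; ring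

lemma norm_itfd_one {E F : Type*} [NormedAddCommGroup E] [NormedSpace ℝ E]
    [NormedAddCommGroup F] [NormedSpace ℝ F] (g : E → F) (z : E) :
    ‖iteratedFDeriv ℝ 1 g z‖ = ‖fderiv ℝ g z‖ := by
  apply le_antisymm
  · apply ContinuousMultilinearMap.opNorm_le_bound (norm_nonneg _)
    intro m
    rw [iteratedFDeriv_one_apply]
    calc ‖fderiv ℝ g z (m 0)‖ ≤ ‖fderiv ℝ g z‖ * ‖m 0‖ := (fderiv ℝ g z).le_opNorm _
      _ = ‖fderiv ℝ g z‖ * ∏ i, ‖m i‖ := by rw [Fin.prod_univ_one]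
  · apply ContinuousLinearMap.opNorm_le_bound _ (norm_nonneg _)
    intro v
    have h := (iteratedFDeriv ℝ 1 g z).le_opNorm (fun _ => v)
    rw [iteratedFDeriv_one_apply] at h
    simpa using h

lemma taylor_aux (N : ℕ) (f : (Fin N → ℝ) → ℝ) (x : Fin N → ℝ) (r C : ℝ)
    (hr : 0 < r) (hC : 0 ≤ C) (hf : ContDiffOn ℝ 2 f (Metric.ball x r))
    (hbound : ∀ y ∈ Metric.ball x r, ‖iteratedFDeriv ℝ 2 f y‖ ≤ C) :
    ∀ y ∈ Metric.ball x r, |f y - f x - fderiv ℝ f x (y - x)| ≤ C * ‖y - x‖ ^ 2 := by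
  intro y hy
  have hso : IsOpen (Metric.ball x r) := Metric.isOpen_ball
  have hsc : Convex ℝ (Metric.ball x r) := convex_ball x r
  have hxm : x ∈ Metric.ball x r := Metric.mem_ball_self hr
  have hdf : ∀ z ∈ Metric.ball x r, DifferentiableAt ℝ f z := fun z hz =>
    (hf.differentiableOn (by norm_num)).differentiableAt (hso.mem_nhds hz)
  have hcd1 : ContDiffOn ℝ 1 (fderiv ℝ f) (Metric.ball x r) :=
    hf.fderiv_of_isOpen hso (by norm_num)
  have hd2 : ∀ z ∈ Metric.ball x r, DifferentiableAt ℝ (fderiv ℝ f) z := fun z hz =>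
    (hcd1.differentiableOn one_ne_zero).differentiableAt (hso.mem_nhds hz)
  have hb2 : ∀ z ∈ Metric.ball x r, ‖fderiv ℝ (fderiv ℝ f) z‖ ≤ C := by
    intro z hz
    have h1 : ‖fderiv ℝ (fderiv ℝ f) z‖ = ‖iteratedFDeriv ℝ 1 (fderiv ℝ f) z‖ :=
      (norm_itfd_one _ _).symm
    rw [h1, norm_iteratedFDeriv_fderiv]
    exact hbound z hz
  have hlip : ∀ z ∈ Metric.ball x r, ‖fderiv ℝ f z - fderiv ℝ f x‖ ≤ C * ‖z - x‖ := fun z hz =>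
    hsc.norm_image_sub_le_of_norm_fderiv_le hd2 hb2 hxm hz
  have hseg : segment ℝ x y ⊆ Metric.ball x r := hsc.segment_subset hxm hy
  have hsegnorm : ∀ z ∈ segment ℝ x y, ‖z - x‖ ≤ ‖y - x‖ := by
    intro z hz
    rw [segment_eq_image'] at hz
    obtain ⟨θ, hθ, rfl⟩ := hz
    rw [add_sub_cancel_left, norm_smul, Real.norm_eq_abs, abs_of_nonneg hθ.1]
    nlinarith [norm_nonneg (y - x), hθ.1, hθ.2]
  have key := (convex_segment x y).norm_image_sub_le_of_norm_fderiv_le'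
    (fun z hz => hdf z (hseg hz))
    (fun z hz => le_trans (hlip z (hseg hz))
      (mul_le_mul_of_nonneg_left (hsegnorm z hz) hC))
    (left_mem_segment ℝ x y) (right_mem_segment ℝ x y)
  rw [Real.norm_eq_abs] at key
  calc |f y - f x - fderiv ℝ f x (y - x)| ≤ C * ‖y - x‖ * ‖y - x‖ := key
    _ = C * ‖y - x‖ ^ 2 := by ring

/-- fundamental averaging identity of extremum seeking for a C²
map with bounded second derivatives on a ball around `x`: the sinusoidal
average recovers each partial derivative up to an `O(a)` error whose constant
depends only on the second-derivative bound. -/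
theorem stmt19 (N : ℕ) (T : ℝ) (hT : 0 < T) (κ : Fin N → ℕ)
    (hκpos : ∀ i, 0 < κ i) (hκinj : Function.Injective κ)
    (f : (Fin N → ℝ) → ℝ) (x : Fin N → ℝ) (r C : ℝ) (hr : 0 < r) (hC : 0 ≤ C)
    (hf : ContDiffOn ℝ 2 f (Metric.ball x r))
    (hbound : ∀ y ∈ Metric.ball x r, ‖iteratedFDeriv ℝ 2 f y‖ ≤ C) :
    ∃ C' : ℝ, 0 ≤ C' ∧ ∀ a : ℝ, 0 < a → a < r → ∀ n : Fin N,
      |(1 / T) * (∫ t in (0 : ℝ)..T,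
          (2 / a) * f (fun i => x i + a * Real.sin ((2 * Real.pi / T) * κ i * t)) *
            Real.sin ((2 * Real.pi / T) * κ n * t))
        - fderiv ℝ f x (Pi.single n 1)| ≤ C' * a := by
  classical
  have hπ := Real.pi_pos
  set L := fderiv ℝ f x with hLdef
  refine ⟨2 * C, by positivity, ?_⟩
  intro a ha har n
  have ha' : a ≠ 0 := ne_of_gt ha
  set y : ℝ → Fin N → ℝ :=
    fun t => fun i => x i + a * Real.sin ((2 * Real.pi / T) * κ i * t) with hydef
  -- membership and norm bound
  have hnorm : ∀ t, ‖y t - x‖ ≤ a := by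
    intro t
    rw [pi_norm_le_iff_of_nonneg ha.le]
    intro i
    have : (y t - x) i = a * Real.sin ((2 * Real.pi / T) * κ i * t) := by
      simp [hydef]
    rw [this, Real.norm_eq_abs, abs_mul, abs_of_pos ha]
    calc a * |Real.sin ((2 * Real.pi / T) * κ i * t)| ≤ a * 1 :=
        mul_le_mul_of_nonneg_left (Real.abs_sin_le_one _) ha.le
      _ = a := mul_one a
  have hyb : ∀ t, y t ∈ Metric.ball x r := by
    intro t
    rw [Metric.mem_ball, dist_eq_norm]
    exact lt_of_le_of_lt (hnorm t) har
  -- continuity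
  have hcy : Continuous y := by
    apply continuous_pi
    intro i
    fun_prop
  have hcfy : Continuous fun t => f (y t) :=
    hf.continuousOn.comp_continuous hcy hyb
  -- remainder
  set R : ℝ → ℝ := fun t => f (y t) - f x - L (y t - x) with hRdef
  have hcR : Continuous R := by
    apply (hcfy.sub continuous_const).sub
    exact L.continuous.comp (hcy.sub continuous_const)
  have hRb : ∀ t, |R t| ≤ C * a ^ 2 := by
    intro t
    calc |R t| ≤ C * ‖y t - x‖ ^ 2 :=
        taylor_aux N f x r C hr hC hf hbound (y t) (hyb t)
      _ ≤ C * a ^ 2 := by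
        apply mul_le_mul_of_nonneg_left _ hC
        exact pow_le_pow_left₀ (norm_nonneg _) (hnorm t) 2
  -- linear functional expansion
  have hLv : ∀ v : Fin N → ℝ, L v = ∑ i, v i * L (Pi.single i 1) := by
    intro v
    have hv : v = ∑ i, v i • (Pi.single i 1 : Fin N → ℝ) := by
      funext j
      simp [Finset.sum_apply, Pi.single_apply]
    conv_lhs => rw [hv]
    rw [map_sum]
    exact Finset.sum_congr rfl fun i _ => by rw [map_smul, smul_eq_mul]
  -- pointwise decomposition
  have hdecomp : ∀ t, (2 / a) * f (y t) * Real.sin ((2 * Real.pi / T) * κ n * t)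
      = (2 / a) * f x * Real.sin ((2 * Real.pi / T) * κ n * t)
      + (∑ i, (2 * L (Pi.single i 1)) *
          (Real.sin ((2 * Real.pi / T) * κ i * t) * Real.sin ((2 * Real.pi / T) * κ n * t)))
      + (2 / a) * R t * Real.sin ((2 * Real.pi / T) * κ n * t) := by
    intro t
    have h1 : L (y t - x)
        = ∑ i, (a * Real.sin ((2 * Real.pi / T) * κ i * t)) * L (Pi.single i 1) := by
      rw [hLv]
      apply Finset.sum_congr rfl
      intro i _
      congr 1
      simp [hydef]
    have hfyt : f (y t) = f x + L (y t - x) + R t := by rw [hRdef]; ring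
    rw [hfyt, h1]
    have hsum : (2 / a) * (∑ i, (a * Real.sin ((2 * Real.pi / T) * κ i * t))
          * L (Pi.single i 1)) * Real.sin ((2 * Real.pi / T) * κ n * t)
        = ∑ i, (2 * L (Pi.single i 1)) *
          (Real.sin ((2 * Real.pi / T) * κ i * t) * Real.sin ((2 * Real.pi / T) * κ n * t)) := by
      rw [Finset.mul_sum, Finset.sum_mul]
      apply Finset.sum_congr rfl
      intro i _
      field_simp
    calc (2 / a) * (f x + (∑ i, (a * Real.sin ((2 * Real.pi / T) * κ i * t))
            * L (Pi.single i 1)) + R t) * Real.sin ((2 * Real.pi / T) * κ n * t)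
        = (2 / a) * f x * Real.sin ((2 * Real.pi / T) * κ n * t)
          + (2 / a) * (∑ i, (a * Real.sin ((2 * Real.pi / T) * κ i * t))
              * L (Pi.single i 1)) * Real.sin ((2 * Real.pi / T) * κ n * t)
          + (2 / a) * R t * Real.sin ((2 * Real.pi / T) * κ n * t) := by ring
      _ = _ := by rw [hsum]
  -- integrability
  have hi1 : IntervalIntegrable
      (fun t => (2 / a) * f x * Real.sin ((2 * Real.pi / T) * κ n * t)) MeasureTheory.volume 0 T :=
    (by fun_prop : Continuous fun t => (2 / a) * f x *
      Real.sin ((2 * Real.pi / T) * κ n * t)).intervalIntegrable 0 T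
  have hi2 : IntervalIntegrable
      (fun t => ∑ i, (2 * L (Pi.single i 1)) *
        (Real.sin ((2 * Real.pi / T) * κ i * t) * Real.sin ((2 * Real.pi / T) * κ n * t)))
      MeasureTheory.volume 0 T := by
    apply Continuous.intervalIntegrable
    apply continuous_finset_sum
    intro i _
    fun_prop
  have hi3 : IntervalIntegrable
      (fun t => (2 / a) * R t * Real.sin ((2 * Real.pi / T) * κ n * t))
      MeasureTheory.volume 0 T := by
    apply Continuous.intervalIntegrable
    fun_prop
  -- compute the integral
  have hsplit : (∫ t in (0 : ℝ)..T,
        (2 / a) * f (y t) * Real.sin ((2 * Real.pi / T) * κ n * t))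
      = (∫ t in (0 : ℝ)..T, (2 / a) * f x * Real.sin ((2 * Real.pi / T) * κ n * t))
      + (∫ t in (0 : ℝ)..T, ∑ i, (2 * L (Pi.single i 1)) *
          (Real.sin ((2 * Real.pi / T) * κ i * t) * Real.sin ((2 * Real.pi / T) * κ n * t)))
      + (∫ t in (0 : ℝ)..T, (2 / a) * R t * Real.sin ((2 * Real.pi / T) * κ n * t)) := by
    rw [intervalIntegral.integral_congr (fun t _ => hdecomp t),
      intervalIntegral.integral_add (hi1.add hi2) hi3, intervalIntegral.integral_add hi1 hi2]
  have hI1 : (∫ t in (0 : ℝ)..T, (2 / a) * f x * Real.sin ((2 * Real.pi / T) * κ n * t)) = 0 := by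
    rw [intervalIntegral.integral_const_mul, aux_sin T hT (κ n), mul_zero]
  have hI2 : (∫ t in (0 : ℝ)..T, ∑ i, (2 * L (Pi.single i 1)) *
      (Real.sin ((2 * Real.pi / T) * κ i * t) * Real.sin ((2 * Real.pi / T) * κ n * t)))
      = T * L (Pi.single n 1) := by
    rw [intervalIntegral.integral_finset_sum]
    · have heach : ∀ i ∈ Finset.univ, (∫ t in (0 : ℝ)..T, (2 * L (Pi.single i 1)) *
          (Real.sin ((2 * Real.pi / T) * κ i * t) * Real.sin ((2 * Real.pi / T) * κ n * t)))
          = if i = n then T * L (Pi.single n 1) else 0 := by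
        intro i _
        rw [intervalIntegral.integral_const_mul, aux_orth T hT (κ i) (κ n) (hκpos i) (hκpos n)]
        by_cases h : i = n
        · rw [if_pos (by rw [h]), if_pos h, h]; ring
        · rw [if_neg (fun hh => h (hκinj hh)), if_neg h, mul_zero]
      rw [Finset.sum_congr rfl heach, Finset.sum_ite_eq' Finset.univ n
        (fun _ => T * L (Pi.single n 1)), if_pos (Finset.mem_univ n)]
    · intro i _
      exact (by fun_prop : Continuous fun t => (2 * L (Pi.single i 1)) *
        (Real.sin ((2 * Real.pi / T) * κ i * t) * Real.sin ((2 * Real.pi / T) * κ n * t))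
        ).intervalIntegrable 0 T
  have hI3 : |∫ t in (0 : ℝ)..T, (2 / a) * R t * Real.sin ((2 * Real.pi / T) * κ n * t)|
      ≤ 2 * C * a * T := by
    have hb : ∀ t ∈ Set.uIoc (0 : ℝ) T,
        ‖(2 / a) * R t * Real.sin ((2 * Real.pi / T) * κ n * t)‖ ≤ 2 * C * a := by
      intro t _
      rw [Real.norm_eq_abs, abs_mul, abs_mul, abs_of_pos (by positivity : (0:ℝ) < 2 / a)]
      calc 2 / a * |R t| * |Real.sin ((2 * Real.pi / T) * κ n * t)|
          ≤ 2 / a * (C * a ^ 2) * 1 := by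
            apply mul_le_mul
            · exact mul_le_mul_of_nonneg_left (hRb t) (by positivity)
            · exact Real.abs_sin_le_one _
            · exact abs_nonneg _
            · positivity
        _ = 2 * C * a := by field_simp
    have h := intervalIntegral.norm_integral_le_of_norm_le_const hb
    rw [Real.norm_eq_abs] at h
    calc |∫ t in (0 : ℝ)..T, (2 / a) * R t * Real.sin ((2 * Real.pi / T) * κ n * t)|
        ≤ 2 * C * a * |T - 0| := h
      _ = 2 * C * a * T := by rw [sub_zero, abs_of_pos hT]
  -- conclude
  have hy_eq : ∀ t, (fun i => x i + a * Real.sin ((2 * Real.pi / T) * κ i * t)) = y t := by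
    intro t; rfl
  have hfinal : (1 / T) * (∫ t in (0 : ℝ)..T,
        (2 / a) * f (y t) * Real.sin ((2 * Real.pi / T) * κ n * t)) - L (Pi.single n 1)
      = (1 / T) * (∫ t in (0 : ℝ)..T, (2 / a) * R t * Real.sin ((2 * Real.pi / T) * κ n * t)) := by
    rw [hsplit, hI1, hI2]
    field_simp
    ring
  simp only [hy_eq]
  rw [hfinal, abs_mul, abs_of_pos (by positivity : (0:ℝ) < 1 / T)]
  calc (1 / T) * |∫ t in (0 : ℝ)..T, (2 / a) * R t * Real.sin ((2 * Real.pi / T) * κ n * t)|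
      ≤ (1 / T) * (2 * C * a * T) := mul_le_mul_of_nonneg_left hI3 (by positivity)
    _ = 2 * C * a := by field_simp
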